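/- There exists α with 0 < α ≤ 1/2 and d_0 ∈ ℕ such that for all d > d_0 and all z ≥ 0 with z/√d ≤ π/2, one has |cos^d(z/√d) − (d−1) cos^{d−2}(z/√d) sin²(z/√d)| ≤ (1 + z²) exp(−α z²). -/

import Mathlib

open Real

lemma cos_le_exp_neg_sin_sq_half (ψ : ℝ) : Real.cos ψ ≤ Real.exp (-(Real.sin ψ ^ 2) / 2) := by
  rcases le_or_gt (Real.cos ψ) 0 with h | h
  · exact h.trans (Real.exp_pos _).le
  · have h2 : Real.cos ψ ^ 2 ≤ Real.exp (-(Real.sin ψ ^ 2) / 2) ^ 2 := by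
      have : Real.exp (-(Real.sin ψ ^ 2) / 2) ^ 2 = Real.exp (-(Real.sin ψ ^ 2)) := by
        rw [← Real.exp_nat_mul]; ring_nf
      rw [this, Real.cos_sq']
      have := Real.add_one_le_exp (-(Real.sin ψ ^ 2))
      linarith
    exact (pow_le_pow_iff_left₀ h.le (Real.exp_pos _).le two_ne_zero).mp h2

lemma cos_pow_le (ψ : ℝ) (hψ0 : 0 ≤ ψ) (hψ : ψ ≤ π / 2) (k : ℕ) :
    Real.cos ψ ^ k ≤ Real.exp (-(2 / π ^ 2) * k * ψ ^ 2) := by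
  have hcos : 0 ≤ Real.cos ψ := Real.cos_nonneg_of_mem_Icc ⟨by linarith [Real.pi_pos], hψ⟩
  have h1 : Real.cos ψ ^ k ≤ Real.exp (-(Real.sin ψ ^ 2) / 2) ^ k :=
    pow_le_pow_left₀ hcos (cos_le_exp_neg_sin_sq_half ψ) k
  have h2 : (2 / π) * ψ ≤ Real.sin ψ := Real.mul_le_sin hψ0 hψ
  have hpi : (0:ℝ) < π := Real.pi_pos
  have h3 : (2 / π * ψ) ^ 2 ≤ Real.sin ψ ^ 2 :=
    pow_le_pow_left₀ (by positivity) h2 2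
  calc Real.cos ψ ^ k ≤ Real.exp (-(Real.sin ψ ^ 2) / 2) ^ k := h1
    _ = Real.exp (k * (-(Real.sin ψ ^ 2) / 2)) := (Real.exp_nat_mul _ k).symm
    _ ≤ Real.exp (-(2 / π ^ 2) * k * ψ ^ 2) := by
        apply Real.exp_le_exp.mpr
        have : (2 / π * ψ) ^ 2 = 4 / π ^ 2 * ψ ^ 2 := by field_simp; ring
        rw [this] at h3
        have hk : (0:ℝ) ≤ k := Nat.cast_nonneg k
        have h4 : 2 / π ^ 2 * ψ ^ 2 ≤ Real.sin ψ ^ 2 / 2 := by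
          have e : 2 / π ^ 2 * ψ ^ 2 = (4 / π ^ 2 * ψ ^ 2) / 2 := by ring
          rw [e]; linarith
        nlinarith [mul_le_mul_of_nonneg_left h4 hk]

set_option maxHeartbeats 1000000 in
/-- Domination lemma, item 3: bound on `|B(z/√d)|`. -/
theorem kostlan_B_bound :
    ∃ α : ℝ, 0 < α ∧ α ≤ 1 / 2 ∧ ∃ d₀ : ℕ, ∀ d : ℕ, d₀ < d → ∀ z : ℝ, 0 ≤ z →
      z / Real.sqrt d ≤ π / 2 →
      |Real.cos (z / Real.sqrt d) ^ d
        - (d - 1 : ℝ) * Real.cos (z / Real.sqrt d) ^ (d - 2)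
          * Real.sin (z / Real.sqrt d) ^ 2|
        ≤ (1 + z ^ 2) * Real.exp (-α * z ^ 2) := by
  refine ⟨1/10, by norm_num, by norm_num, 3, ?_⟩
  intro d hd z hz hψπ
  set ψ := z / Real.sqrt d with hψdef
  have hd4 : 4 ≤ d := hd
  have hdpos : (0:ℝ) < d := by positivity
  have hsd : (0:ℝ) < Real.sqrt d := Real.sqrt_pos.mpr hdpos
  have hψ0 : 0 ≤ ψ := div_nonneg hz hsd.le
  have hcos : 0 ≤ Real.cos ψ := Real.cos_nonneg_of_mem_Icc ⟨by linarith [Real.pi_pos], hψπ⟩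
  have hψsq : ψ ^ 2 = z ^ 2 / d := by
    rw [hψdef, div_pow, Real.sq_sqrt hdpos.le]
  have hpi : (0:ℝ) < π := Real.pi_pos
  have hpi2 : π ^ 2 < 10 := by nlinarith [Real.pi_lt_d2]
  -- term 1
  have hA : Real.cos ψ ^ d ≤ Real.exp (-(1/10) * z ^ 2) := by
    refine (cos_pow_le ψ hψ0 hψπ d).trans (Real.exp_le_exp.mpr ?_)
    rw [hψsq]
    have : -(2 / π ^ 2) * d * (z ^ 2 / d) = -(2 / π ^ 2) * z ^ 2 := by
      field_simp
    rw [this]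
    have hz2 : (0:ℝ) ≤ z ^ 2 := sq_nonneg z
    have : (1:ℝ)/10 ≤ 2 / π ^ 2 := by
      rw [div_le_div_iff₀ (by norm_num) (by positivity)]
      nlinarith
    nlinarith
  -- term 2
  have hsin : Real.sin ψ ^ 2 ≤ ψ ^ 2 :=
    pow_le_pow_left₀ (Real.sin_nonneg_of_nonneg_of_le_pi hψ0 (by linarith)) (Real.sin_le hψ0) 2
  have hd1 : (0:ℝ) ≤ (d:ℝ) - 1 := by
    have : (1:ℝ) ≤ d := by exact_mod_cast Nat.one_le_of_lt hd
    linarith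
  have hB : (d - 1 : ℝ) * Real.cos ψ ^ (d - 2) * Real.sin ψ ^ 2
      ≤ z ^ 2 * Real.exp (-(1/10) * z ^ 2) := by
    have hc : Real.cos ψ ^ (d - 2) ≤ Real.exp (-(2 / π ^ 2) * (d - 2 : ℕ) * ψ ^ 2) :=
      cos_pow_le ψ hψ0 hψπ (d - 2)
    have hcast : ((d - 2 : ℕ) : ℝ) = (d:ℝ) - 2 := by
      have : 2 ≤ d := by omega
      push_cast [this]; ring
    have hexp : Real.exp (-(2 / π ^ 2) * (d - 2 : ℕ) * ψ ^ 2)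
        ≤ Real.exp (-(1/10) * z ^ 2) := by
      apply Real.exp_le_exp.mpr
      rw [hcast, hψsq]
      have hdd : (4:ℝ) ≤ d := by exact_mod_cast hd4
      have heq : -(2 / π ^ 2) * ((d:ℝ) - 2) * (z ^ 2 / d)
          = -(2 / π ^ 2 * ((d:ℝ) - 2) / d) * z ^ 2 := by
        field_simp
      rw [heq]
      have hkey : (1:ℝ)/10 ≤ 2 / π ^ 2 * ((d:ℝ) - 2) / d := by
        have h1 : 2 / π ^ 2 * ((d:ℝ) - 2) / d = 2 * ((d:ℝ) - 2) / (π ^ 2 * d) := by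
          field_simp
        rw [h1, le_div_iff₀ (by positivity)]
        nlinarith [mul_lt_mul_of_pos_right hpi2 hdpos]
      nlinarith [mul_le_mul_of_nonneg_right hkey (sq_nonneg z)]
    calc (d - 1 : ℝ) * Real.cos ψ ^ (d - 2) * Real.sin ψ ^ 2
        ≤ (d - 1 : ℝ) * Real.exp (-(1/10) * z ^ 2) * ψ ^ 2 := by
          exact mul_le_mul (mul_le_mul le_rfl (hc.trans hexp) (pow_nonneg hcos _) hd1) hsin
            (sq_nonneg _) (mul_nonneg hd1 (Real.exp_pos _).le)
      _ = ((d:ℝ) - 1) / d * z ^ 2 * Real.exp (-(1/10) * z ^ 2) := by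
          rw [hψsq]; ring
      _ ≤ z ^ 2 * Real.exp (-(1/10) * z ^ 2) := by
          apply mul_le_mul_of_nonneg_right _ (Real.exp_pos _).le
          have : ((d:ℝ) - 1) / d ≤ 1 := by
            rw [div_le_one hdpos]; linarith
          nlinarith [sq_nonneg z]
  have habs : |Real.cos ψ ^ d - (d - 1 : ℝ) * Real.cos ψ ^ (d - 2) * Real.sin ψ ^ 2|
      ≤ Real.exp (-(1/10) * z ^ 2) + z ^ 2 * Real.exp (-(1/10) * z ^ 2) := by
    rw [abs_sub_le_iff]
    constructor
    · have h0 : 0 ≤ (d - 1 : ℝ) * Real.cos ψ ^ (d - 2) * Real.sin ψ ^ 2 :=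
        mul_nonneg (mul_nonneg hd1 (pow_nonneg hcos _)) (sq_nonneg _)
      linarith
    · have h0 : 0 ≤ Real.cos ψ ^ d := pow_nonneg hcos _
      linarith
  calc _ ≤ Real.exp (-(1/10) * z ^ 2) + z ^ 2 * Real.exp (-(1/10) * z ^ 2) := habs
    _ = (1 + z ^ 2) * Real.exp (-(1/10) * z ^ 2) := by ring
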